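/- For every integer g ≥ 0 there exists a connected open Feynman graph T_g of the φ₃⁴-theory whose boundary graph ∂T_g is isomorphic, as a vertex-bipartite edge-3-colored graph, to the canonical genus-g graph C_g (which triangulates the closed orientable surface of genus g). -/

import Mathlib

/-!  Open colored graphs. -/

/-- An open `(D+1)`-colored graph with colors `{0,1,…,D}`: finite sets `W` (white) and
`B` (black) of vertices, bijections `σ c : W ≃ B` for the colors `c = 1,…,D` (indexed by
`Fin D`), and color-0 data: subsets `W₀ ⊆ W` and `B₀ ⊆ B` and a map `σ₀` which (for a
proper graph, see `OGraph.IsProper`) restricts to a bijection from `W₀` onto `B₀`; the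
color-0 edges are the pairs `(w, σ₀ w)` with `w ∈ W₀`.  The vertices outside `W₀ ∪ B₀`
are the external vertices. -/
structure OGraph (D : ℕ) where
  W : Type
  B : Type
  finW : Finite W
  finB : Finite B
  σ : Fin D → W ≃ B
  W₀ : Set W
  B₀ : Set B
  σ₀ : W → B

namespace OGraph

variable {D : ℕ}

/-- The color-0 data is a bijection from `W₀` onto `B₀`. -/
def IsProper (G : OGraph D) : Prop := Set.BijOn G.σ₀ G.W₀ G.B₀

/-- A closed graph is an open graph with no external vertices. -/
def IsClosed (G : OGraph D) : Prop := G.W₀ = Set.univ ∧ G.B₀ = Set.univ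

/-- One step along a (0c)-bicolored path: from the white vertex `w` walk along the
color-`c` edge to `σ_c w` and then back along a color-0 edge to the white vertex `w'`. -/
def Step (G : OGraph D) (c : Fin D) (w w' : G.W) : Prop :=
  w' ∈ G.W₀ ∧ G.σ c w ∈ G.B₀ ∧ G.σ₀ w' = G.σ c w

/-- Boundary adjacency (the color-`c` edges of the boundary graph `∂G`): the external
vertices `w` and `b` are the two endpoints of a maximal (0c)-bicolored path of `G`. -/
def BdryAdj (G : OGraph D) (c : Fin D) (w : G.W) (b : G.B) : Prop :=
  w ∉ G.W₀ ∧ b ∉ G.B₀ ∧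
    ∃ w' : G.W, Relation.ReflTransGen (G.Step c) w w' ∧ G.σ c w' = b

/-- Adjacency of vertices of an open colored graph (an edge of any color joins them). -/
def Adj (G : OGraph D) : G.W ⊕ G.B → G.W ⊕ G.B → Prop
  | Sum.inl w, Sum.inr b => (∃ c, G.σ c w = b) ∨ (w ∈ G.W₀ ∧ G.σ₀ w = b)
  | Sum.inr b, Sum.inl w => (∃ c, G.σ c w = b) ∨ (w ∈ G.W₀ ∧ G.σ₀ w = b)
  | Sum.inl _, Sum.inl _ => False
  | Sum.inr _, Sum.inr _ => False

/-- A graph is connected if any two of its vertices are joined by a path of edges. -/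
def Connected (G : OGraph D) : Prop :=
  ∀ x y : G.W ⊕ G.B, Relation.ReflTransGen G.Adj x y

/-- An open 4-colored graph (colors `{0,1,2,3}`; the colors `1,2,3` are indexed by
`Fin 3`) is a Feynman graph of the φ₃⁴-theory iff every connected component of the
3-colored graph obtained by deleting all color-0 edges is one of the quartic vertices
`V₁, V₂, V₃`: the white vertices pair up, `w` with a partner `w' ≠ w`, so that for some
color `i` the two edges at `w` of the colors `j ≠ i` end at the same black vertex as the
color-`i` edge of `w'`, and vice versa. -/
def Phi34 (G : OGraph 3) : Prop :=
  ∀ w : G.W, ∃ i : Fin 3, ∃ w' : G.W, w' ≠ w ∧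
    (∀ j : Fin 3, j ≠ i → G.σ j w = G.σ i w') ∧
    (∀ j : Fin 3, j ≠ i → G.σ j w' = G.σ i w)

/-- Connected sum of two open `(D+1)`-colored graphs along the color-0 edges
`(wg, σ₀ wg)` of `G` and `(wh, σ₀ wh)` of `H`: delete the two edges and add the color-0
edges `(wg, H.σ₀ wh)` and `(wh, G.σ₀ wg)`; all other edges are kept. -/
noncomputable def connSum0 (G H : OGraph D) (wg : G.W) (wh : H.W) : OGraph D where
  W := G.W ⊕ H.W
  B := G.B ⊕ H.B
  finW := by haveI := G.finW; haveI := H.finW; exact inferInstance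
  finB := by haveI := G.finB; haveI := H.finB; exact inferInstance
  σ := fun c => (G.σ c).sumCongr (H.σ c)
  W₀ := Sum.inl '' G.W₀ ∪ Sum.inr '' H.W₀
  B₀ := Sum.inl '' G.B₀ ∪ Sum.inr '' H.B₀
  σ₀ := fun x =>
    letI : DecidableEq (G.W ⊕ H.W) := Classical.decEq _
    if x = Sum.inl wg then Sum.inr (H.σ₀ wh)
    else if x = Sum.inr wh then Sum.inl (G.σ₀ wg)
    else Sum.map G.σ₀ H.σ₀ x

end OGraph

/-- The color-`c` bijection (white `i` ↦ black vertex) of the canonical genus-`g`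
graph `C_g`: its vertices are indexed by `ℤ/(2g+1)`, the color-1 edges are `w_i b_i`,
the color-2 edges are `w_i b_{i−1}`, and the color-3 edges are `w_i b_{i+g}`
(colors `1,2,3` indexed by `Fin 3` as `0 ↦ 1`, `1 ↦ 2`, `2 ↦ 3`). -/
def canonicalσ (g : ℕ) (c : Fin 3) : ZMod (2 * g + 1) ≃ ZMod (2 * g + 1) :=
  if c = 0 then Equiv.refl _
  else if c = 1 then Equiv.subRight (1 : ZMod (2 * g + 1))
  else Equiv.addRight (g : ZMod (2 * g + 1))
namespace Phi34Aux

def perm3 : Fin 3 → Equiv.Perm (Fin 4) := ![Equiv.swap 0 1, Equiv.swap 2 3, Equiv.refl _]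

def s0 (g : ℕ) (x : Fin 4 × ZMod (2 * g + 1)) : Fin 4 × ZMod (2 * g + 1) :=
  (![0, 2, 3, 0] x.1, x.2 + ![0, 1, (g : ZMod (2 * g + 1)), 0] x.1)

def T (g : ℕ) : OGraph 3 where
  W := Fin 4 × ZMod (2 * g + 1)
  B := Fin 4 × ZMod (2 * g + 1)
  finW := inferInstance
  finB := inferInstance
  σ := fun c => (perm3 c).prodCongr (Equiv.refl _)
  W₀ := {x | x.1 ≠ 0}
  B₀ := {x | x.1 ≠ 1}
  σ₀ := s0 g

variable (g : ℕ)

lemma T_sigma (c : Fin 3) (x : Fin 4 × ZMod (2 * g + 1)) :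
    (T g).σ c x = (perm3 c x.1, x.2) := rfl

lemma T_sigma0 (x : Fin 4 × ZMod (2 * g + 1)) : (T g).σ₀ x = s0 g x := rfl

lemma mem_W0 (x : Fin 4 × ZMod (2 * g + 1)) : x ∈ (T g).W₀ ↔ x.1 ≠ 0 := Iff.rfl
lemma mem_B0 (x : Fin 4 × ZMod (2 * g + 1)) : x ∈ (T g).B₀ ↔ x.1 ≠ 1 := Iff.rfl

lemma isProper : (T g).IsProper := by
  refine ⟨?_, ?_, ?_⟩
  · rintro ⟨i, k⟩ hi
    show (s0 g (i, k)).1 ≠ 1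
    fin_cases i <;> simp [s0]
  · rintro ⟨i, k⟩ hi ⟨j, l⟩ hj h
    replace h : s0 g (i, k) = s0 g (j, l) := h
    show ((i, k) : Fin 4 × ZMod (2 * g + 1)) = (j, l)
    fin_cases i <;> fin_cases j <;> simp_all [s0] <;>
      first
        | exact ((mem_W0 g _).mp hi) rfl
        | exact ((mem_W0 g _).mp hj) rfl
  · rintro ⟨i, k⟩ hi
    replace hi : i ≠ 1 := hi
    fin_cases i
    · exact ⟨(3, k), by show (3 : Fin 4) ≠ 0; decide, by simp [T_sigma0, s0]; rfl⟩
    · simp at hi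
    · exact ⟨(1, k - 1), by show (1 : Fin 4) ≠ 0; decide, by simp [T_sigma0, s0]; rfl⟩
    · exact ⟨(2, k - (g : ZMod (2 * g + 1))), by show (2 : Fin 4) ≠ 0; decide,
        by simp [T_sigma0, s0]; rfl⟩

lemma phi34 : (T g).Phi34 := by
  rintro ⟨a, k⟩
  have key : ∀ a : Fin 4, ∃ c : Fin 3, ∃ b : Fin 4, b ≠ a ∧
      (∀ j, j ≠ c → perm3 j a = perm3 c b) ∧ (∀ j, j ≠ c → perm3 j b = perm3 c a) := by
    decide
  obtain ⟨c, b, hne, h1, h2⟩ := key a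
  refine ⟨c, (b, k), ?_, ?_, ?_⟩
  · exact fun h => hne (congrArg Prod.fst h)
  · intro j hj; simp [T_sigma, h1 j hj]; rfl
  · intro j hj; simp [T_sigma, h2 j hj]; rfl


lemma adj_symm : Symmetric (T g).Adj := by
  rintro (w | b) (w' | b') h <;> exact h

lemma adj_sigma (c : Fin 3) (w : Fin 4 × ZMod (2 * g + 1)) :
    (T g).Adj (Sum.inl w) (Sum.inr ((T g).σ c w)) := Or.inl ⟨c, rfl⟩

lemma adj' (c : Fin 3) (i j : Fin 4) (k : ZMod (2 * g + 1)) (h : perm3 c i = j) :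
    (T g).Adj (Sum.inl (i, k)) (Sum.inr (j, k)) := by
  have := adj_sigma g c (i, k)
  rwa [show (T g).σ c (i, k) = (j, k) by rw [T_sigma, h]] at this

lemma adj0 (i j : Fin 4) (k m : ZMod (2 * g + 1)) (hi : i ≠ 0)
    (h : s0 g (i, k) = (j, m)) :
    (T g).Adj (Sum.inl (i, k)) (Sum.inr (j, m)) := Or.inr ⟨hi, h⟩

/-- shorthand -/
abbrev L (i : Fin 4) (k : ZMod (2 * g + 1)) : (T g).W ⊕ (T g).B := Sum.inl (i, k)
abbrev Rt (i : Fin 4) (k : ZMod (2 * g + 1)) : (T g).W ⊕ (T g).B := Sum.inr (i, k)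

lemma reach_next (k : ZMod (2 * g + 1)) :
    Relation.ReflTransGen (T g).Adj (L g 0 k) (L g 0 (k + 1)) := by
  have sym := adj_symm g
  refine .head (adj' g 1 0 0 k (by decide)) (.head (sym (adj' g 0 1 0 k (by decide)))
    (.head (adj0 g 1 2 k (k + 1) (by decide) (by simp [s0]))
    (.head (sym (adj' g 2 2 2 (k + 1) (by decide)))
    (.head (adj' g 1 2 3 (k + 1) (by decide))
    (.head (sym (adj' g 0 3 3 (k + 1) (by decide)))
    (.head (adj0 g 3 0 (k + 1) (k + 1) (by decide) (by simp [s0]))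
    (.head (sym (adj' g 1 0 0 (k + 1) (by decide))) .refl)))))))

lemma reach_block (k : ZMod (2 * g + 1)) (i : Fin 4) :
    Relation.ReflTransGen (T g).Adj (L g 0 k) (L g i k) ∧
    Relation.ReflTransGen (T g).Adj (L g 0 k) (Rt g i k) := by
  have sym := adj_symm g
  have hR0 : Relation.ReflTransGen (T g).Adj (L g 0 k) (Rt g 0 k) :=
    .single (adj' g 1 0 0 k (by decide))
  have hL1 : Relation.ReflTransGen (T g).Adj (L g 0 k) (L g 1 k) :=
    hR0.tail (sym (adj' g 0 1 0 k (by decide)))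
  have hL3 : Relation.ReflTransGen (T g).Adj (L g 0 k) (L g 3 k) :=
    hR0.tail (sym (adj0 g 3 0 k k (by decide) (by simp [s0])))
  have hR3 : Relation.ReflTransGen (T g).Adj (L g 0 k) (Rt g 3 k) :=
    hL3.tail (adj' g 0 3 3 k (by decide))
  have hL2 : Relation.ReflTransGen (T g).Adj (L g 0 k) (L g 2 k) :=
    hR3.tail (sym (adj' g 1 2 3 k (by decide)))
  have hR2 : Relation.ReflTransGen (T g).Adj (L g 0 k) (Rt g 2 k) :=
    hL2.tail (adj' g 2 2 2 k (by decide))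
  have hR1 : Relation.ReflTransGen (T g).Adj (L g 0 k) (Rt g 1 k) :=
    .single (adj' g 0 0 1 k (by decide))
  fin_cases i
  · exact ⟨.refl, hR0⟩
  · exact ⟨hL1, hR1⟩
  · exact ⟨hL2, hR2⟩
  · exact ⟨hL3, hR3⟩

lemma reach_nat (m : ℕ) :
    Relation.ReflTransGen (T g).Adj (L g 0 0) (L g 0 (m : ZMod (2 * g + 1))) := by
  induction m with
  | zero => simpa using Relation.ReflTransGen.refl
  | succ m ih => push_cast; exact ih.trans (reach_next g _)

lemma reach_any (x : (T g).W ⊕ (T g).B) :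
    Relation.ReflTransGen (T g).Adj (L g 0 0) x := by
  have key : ∀ k : ZMod (2 * g + 1),
      Relation.ReflTransGen (T g).Adj (L g 0 0) (L g 0 k) := by
    intro k
    have : ((k.val : ℕ) : ZMod (2 * g + 1)) = k := ZMod.natCast_rightInverse k
    simpa [this] using reach_nat g k.val
  rcases x with w | b
  · obtain ⟨i, k⟩ := w
    exact (key k).trans (reach_block g k i).1
  · obtain ⟨i, k⟩ := b
    exact (key k).trans (reach_block g k i).2

lemma connected : (T g).Connected := by
  intro x y
  haveI : Std.Symm (T g).Adj := ⟨fun a b h => adj_symm g h⟩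
  exact ((Relation.ReflTransGen.stdSymm.symm _ _) (reach_any g x)).trans (reach_any g y)


lemma step_iff (c : Fin 3) (w x : Fin 4 × ZMod (2 * g + 1)) :
    (T g).Step c w x ↔ x.1 ≠ 0 ∧ perm3 c w.1 ≠ 1 ∧ s0 g x = (perm3 c w.1, w.2) :=
  Iff.rfl

lemma sigma_eq (c : Fin 3) (w b : Fin 4 × ZMod (2 * g + 1)) :
    (T g).σ c w = b ↔ ((perm3 c w.1, w.2) : Fin 4 × ZMod (2 * g + 1)) = b :=
  Iff.rfl

lemma not_mem_W0 (k : ZMod (2 * g + 1)) : ((0 : Fin 4), k) ∉ (T g).W₀ := fun h => h rfl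
lemma not_mem_B0 (k : ZMod (2 * g + 1)) : ((1 : Fin 4), k) ∉ (T g).B₀ := fun h => h rfl

lemma bdry0 (k m : ZMod (2 * g + 1)) :
    (T g).BdryAdj 0 ((0 : Fin 4), k) ((1 : Fin 4), m) ↔ canonicalσ g 0 k = m := by
  constructor
  · rintro ⟨hw, hb, w', hpath, hend⟩
    have inv : ∀ x : Fin 4 × ZMod (2 * g + 1),
        Relation.ReflTransGen ((T g).Step 0) ((0 : Fin 4), k) x →
        x = ((0 : Fin 4), k) := by
      intro x h
      induction h with
      | refl => rfl
      | tail h1 h2 ih =>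
        rw [ih, step_iff] at h2
        obtain ⟨h0, hb1, hs⟩ := h2
        simp [perm3, Equiv.swap_apply_def] at hb1
    rw [inv w' hpath] at hend
    rw [sigma_eq] at hend
    simp only [perm3, Equiv.swap_apply_def] at hend
    simp only [canonicalσ, if_pos rfl, Equiv.refl_apply, if_true]
    simpa using hend
  · intro h
    simp only [canonicalσ, if_pos rfl, Equiv.refl_apply, if_true] at h
    refine ⟨not_mem_W0 g k, not_mem_B0 g m, ((0 : Fin 4), k), .refl, ?_⟩
    rw [sigma_eq]
    simp [perm3, Equiv.swap_apply_def, h]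

lemma bdry1 (k m : ZMod (2 * g + 1)) :
    (T g).BdryAdj 1 ((0 : Fin 4), k) ((1 : Fin 4), m) ↔ canonicalσ g 1 k = m := by
  have hcan : canonicalσ g 1 k = k - 1 := by
    simp [canonicalσ]
  constructor
  · rintro ⟨hw, hb, w', hpath, hend⟩
    have inv : ∀ x : Fin 4 × ZMod (2 * g + 1),
        Relation.ReflTransGen ((T g).Step 1) ((0 : Fin 4), k) x →
        x = ((0 : Fin 4), k) ∨ x = ((3 : Fin 4), k) ∨ x = ((1 : Fin 4), k - 1) := by
      intro x h
      induction h with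
      | refl => exact Or.inl rfl
      | tail h1 h2 ih =>
        rw [step_iff] at h2
        obtain ⟨h0, hb1, hs⟩ := h2
        rename_i b x'
        obtain ⟨i, j⟩ := x'
        rcases ih with rfl | rfl | rfl <;> fin_cases i <;>
          simp_all [s0, perm3, Equiv.swap_apply_def, eq_sub_iff_add_eq]
    rw [hcan]
    rcases inv w' hpath with rfl | rfl | rfl <;> rw [sigma_eq] at hend <;>
      simp_all [perm3, Equiv.swap_apply_def]
  · intro h
    rw [hcan] at h
    have s1 : (T g).Step 1 ((0 : Fin 4), k) ((3 : Fin 4), k) := by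
      rw [step_iff]
      refine ⟨by simp, by simp [perm3, Equiv.swap_apply_def], ?_⟩
      simp [s0, perm3, Equiv.swap_apply_def]
    have s2 : (T g).Step 1 ((3 : Fin 4), k) ((1 : Fin 4), k - 1) := by
      rw [step_iff]
      refine ⟨by simp, by simp [perm3, Equiv.swap_apply_def], ?_⟩
      simp [s0, perm3, Equiv.swap_apply_def]
    refine ⟨not_mem_W0 g k, not_mem_B0 g m, ((1 : Fin 4), k - 1),
      Relation.ReflTransGen.tail (Relation.ReflTransGen.single s1) s2, ?_⟩
    rw [sigma_eq]
    simp [perm3, Equiv.swap_apply_def, h]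

lemma bdry2 (k m : ZMod (2 * g + 1)) :
    (T g).BdryAdj 2 ((0 : Fin 4), k) ((1 : Fin 4), m) ↔ canonicalσ g 2 k = m := by
  have hz : ((2 * g + 1 : ℕ) : ZMod (2 * g + 1)) = 0 := ZMod.natCast_self _
  push_cast at hz
  have hgg : k - (g : ZMod (2 * g + 1)) - 1 = k + g := by linear_combination -hz
  have hcan : canonicalσ g 2 k = k + g := by
    simp [canonicalσ]
  have inv : ∀ x : Fin 4 × ZMod (2 * g + 1),
      Relation.ReflTransGen ((T g).Step 2) ((0 : Fin 4), k) x →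
      x = ((0 : Fin 4), k) ∨ x = ((3 : Fin 4), k) ∨
        x = ((2 : Fin 4), k - g) ∨ x = ((1 : Fin 4), k - g - 1) := by
    clear hgg hcan
    intro x h
    induction h with
    | refl => exact Or.inl rfl
    | tail h1 h2 ih =>
      rw [step_iff] at h2
      obtain ⟨h0, hb1, hs⟩ := h2
      rename_i b x'
      obtain ⟨i, j⟩ := x'
      rcases ih with rfl | rfl | rfl | rfl <;> fin_cases i <;>
        simp_all [s0, perm3, Equiv.swap_apply_def, eq_sub_iff_add_eq]
  constructor
  · rintro ⟨hw, hb, w', hpath, hend⟩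
    rw [hcan]
    rcases inv w' hpath with rfl | rfl | rfl | rfl <;> rw [sigma_eq] at hend <;>
      simp_all [perm3, Equiv.swap_apply_def]
  · intro h
    rw [hcan] at h
    have s1 : (T g).Step 2 ((0 : Fin 4), k) ((3 : Fin 4), k) := by
      rw [step_iff]
      refine ⟨by simp, by simp [perm3], ?_⟩
      simp [s0, perm3]
    have s2 : (T g).Step 2 ((3 : Fin 4), k) ((2 : Fin 4), k - g) := by
      rw [step_iff]
      refine ⟨by simp, by simp [perm3], ?_⟩
      simp [s0, perm3]
    have s3 : (T g).Step 2 ((2 : Fin 4), k - g) ((1 : Fin 4), k - g - 1) := by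
      rw [step_iff]
      refine ⟨by simp, by simp [perm3], ?_⟩
      simp [s0, perm3]
    refine ⟨not_mem_W0 g k, not_mem_B0 g m, ((1 : Fin 4), k - g - 1),
      Relation.ReflTransGen.tail (Relation.ReflTransGen.tail
        (Relation.ReflTransGen.single s1) s2) s3, ?_⟩
    rw [sigma_eq]
    have : k - (g : ZMod (2 * g + 1)) - 1 = m := hgg.trans h
    simp [perm3, this]


/-- External-white-vertex bijection. -/
def eW : {w : (T g).W // w ∉ (T g).W₀} ≃ ZMod (2 * g + 1) where
  toFun w := w.1.2
  invFun k := ⟨((0 : Fin 4), k), not_mem_W0 g k⟩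
  left_inv := by
    rintro ⟨⟨i, k⟩, h⟩
    have hi : i = 0 := not_ne_iff.mp h
    subst hi
    rfl
  right_inv k := rfl

/-- External-black-vertex bijection. -/
def eB : {b : (T g).B // b ∉ (T g).B₀} ≃ ZMod (2 * g + 1) where
  toFun b := b.1.2
  invFun k := ⟨((1 : Fin 4), k), not_mem_B0 g k⟩
  left_inv := by
    rintro ⟨⟨i, k⟩, h⟩
    have hi : i = 1 := not_ne_iff.mp h
    subst hi
    rfl
  right_inv k := rfl

end Phi34Aux

/-- For every integer `g ≥ 0` there is a connected open Feynman graph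
`T_g` of the φ₃⁴-theory whose boundary graph `∂T_g` is isomorphic, as a vertex-bipartite
edge-3-colored graph, to the canonical genus-`g` graph `C_g`: there are bijections from
the external white (resp. black) vertices onto the white (resp. black) vertices of `C_g`
matching the color-`c` boundary edges with the color-`c` edges of `C_g`, for each `c`. -/
theorem phi34_null_bordism (g : ℕ) :
    ∃ T : OGraph 3, T.IsProper ∧ T.Phi34 ∧ T.Connected ∧
      ∃ (eW : {w : T.W // w ∉ T.W₀} ≃ ZMod (2 * g + 1))
        (eB : {b : T.B // b ∉ T.B₀} ≃ ZMod (2 * g + 1)),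
        ∀ (c : Fin 3) (w : {w : T.W // w ∉ T.W₀}) (b : {b : T.B // b ∉ T.B₀}),
          T.BdryAdj c w.1 b.1 ↔ canonicalσ g c (eW w) = eB b := by
  refine ⟨Phi34Aux.T g, Phi34Aux.isProper g, Phi34Aux.phi34 g, Phi34Aux.connected g,
    Phi34Aux.eW g, Phi34Aux.eB g, ?_⟩
  rintro c ⟨⟨i, k⟩, hw⟩ ⟨⟨j, m⟩, hb⟩
  have hi : i = 0 := not_ne_iff.mp hw
  have hj : j = 1 := not_ne_iff.mp hb
  subst hi hj
  show (Phi34Aux.T g).BdryAdj c ((0 : Fin 4), k) ((1 : Fin 4), m) ↔ canonicalσ g c k = m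
  fin_cases c
  · exact Phi34Aux.bdry0 g k m
  · exact Phi34Aux.bdry1 g k m
  · exact Phi34Aux.bdry2 g k m
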